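/- Correctness of the writing phase within a segment (case 1): Let F be a field, let ℓ, m ≥ 1, let f_1, …, f_ℓ be distinct elements of F, let π be a permutation of {1, …, m}, let Δ ∈ F^{m×ℓ} (updates, with Δ_{s,·} = 0 for subpackets s not updated), let Z_1, …, Z_m ∈ F, and let Z̄ be any fixed mℓ × mℓ matrix over F. For α ∈ F define: (i) U_s(α) = ∑_{k=1}^ℓ (∏_{r≠k}(f_r − α)) Δ_{s,k}/∏_{r≠k}(f_r − f_k) + (∏_{r=1}^ℓ(f_r − α)) Z_s; (ii) the vector Û(α) ∈ F^{mℓ} whose j-th block of ℓ entries all equal U_{π(j)}(α); (iii) the matrix R(α) ∈ F^{mℓ×mℓ} whose (i, π^{-1}(i)) block equals diag(1/(f_1 − α), …, 1/(f_ℓ − α)) for each i, all other blocks zero, plus Z̄. Then there exist polynomials q_{i,k} over F of degree at most ℓ, with coefficients not depending on α, such that for every α ∈ F with α ∉ {f_1, …, f_ℓ} and every block index i and symbol index k, the ((i−1)ℓ + k)-th entry of R(α)Û(α) equals Δ_{i,k}/(f_k − α) + q_{i,k}(α). -/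

import Mathlib

open Finset Polynomial

/-- Correctness of the writing phase within a segment (case 1): multiplying the
permuted update vector `Û(α)` (whose `j`-th block of `ℓ` entries all equal the
combined update `U (π j) α`) by the noise-added permutation-reversing matrix
`R(α)` (with block `diag (1/(f 1 − α), …, 1/(f ℓ − α))` at block position
`(i, π⁻¹ i)`, zero blocks elsewhere, plus an arbitrary fixed noise matrix `Z̄`)
yields, at entry `(i, k)`, the value `Δ i k / (f k − α)` plus the evaluation of
a polynomial of degree at most `ℓ` whose coefficients do not depend on `α`. -/
theorem writing_phase_correctness_case1 {F : Type*} [Field F]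
    (ℓ m : ℕ) (hℓ : 1 ≤ ℓ) (hm : 1 ≤ m)
    (f : Fin ℓ → F) (hf : Function.Injective f)
    (π : Equiv.Perm (Fin m))
    (Δ : Fin m → Fin ℓ → F) (Z : Fin m → F)
    (Zbar : Matrix (Fin m × Fin ℓ) (Fin m × Fin ℓ) F)
    (U : Fin m → F → F)
    (hU : ∀ s α, U s α = (∑ k, (∏ r ∈ univ \ {k}, (f r - α)) *
          (Δ s k / ∏ r ∈ univ \ {k}, (f r - f k))) + (∏ r, (f r - α)) * Z s)
    (Uhat : F → (Fin m × Fin ℓ) → F)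
    (hUhat : ∀ α j k, Uhat α (j, k) = U (π j) α)
    (R : F → Matrix (Fin m × Fin ℓ) (Fin m × Fin ℓ) F)
    (hR : ∀ α i k j k', R α (i, k) (j, k')
      = (if j = π⁻¹ i ∧ k' = k then 1 / (f k - α) else 0) + Zbar (i, k) (j, k')) :
    ∃ q : Fin m → Fin ℓ → F[X], (∀ i k, (q i k).degree ≤ (ℓ : ℕ)) ∧
      ∀ α : F, (∀ r, α ≠ f r) → ∀ (i : Fin m) (k : Fin ℓ),
        (R α).mulVec (Uhat α) (i, k) = Δ i k / (f k - α) + (q i k).eval α := by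
  classical
  -- polynomial version of U
  set P : Fin m → F[X] := fun s =>
    (∑ k, (∏ r ∈ univ \ {k}, (C (f r) - X)) *
      C (Δ s k / ∏ r ∈ univ \ {k}, (f r - f k))) + (∏ r, (C (f r) - X)) * C (Z s) with hP
  have hPeval : ∀ s α, (P s).eval α = U s α := by
    intro s α
    simp [hP, hU, eval_finset_sum, eval_prod]
  have hfac : ∀ (t : Finset (Fin ℓ)), (∏ r ∈ t, (C (f r) - X)).natDegree ≤ t.card := by
    intro t
    refine (natDegree_prod_le _ _).trans ?_
    have : ∀ r ∈ t, (C (f r) - X).natDegree ≤ 1 := by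
      intro r _
      refine (natDegree_sub_le _ _).trans ?_
      simp
    have h := Finset.sum_le_sum this
    simpa using h
  have hPdeg : ∀ s, (P s).natDegree ≤ ℓ := by
    intro s
    refine (natDegree_add_le _ _).trans (max_le ?_ ?_)
    · refine natDegree_sum_le_of_forall_le _ _ ?_
      intro k _
      refine (natDegree_mul_le).trans ?_
      have h1 := hfac (univ \ {k})
      have h2 : (univ \ {k} : Finset (Fin ℓ)).card ≤ ℓ := by
        calc (univ \ {k} : Finset (Fin ℓ)).card ≤ (univ : Finset (Fin ℓ)).card :=
          Finset.card_le_card (Finset.sdiff_subset)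
          _ = ℓ := by simp
      have h3 : (C (Δ s k / ∏ r ∈ univ \ {k}, (f r - f k))).natDegree = 0 := natDegree_C _
      omega
    · refine (natDegree_mul_le).trans ?_
      have h1 := hfac (univ : Finset (Fin ℓ))
      have h2 : (C (Z s)).natDegree = 0 := natDegree_C _
      have h3 : (univ : Finset (Fin ℓ)).card = ℓ := by simp
      omega
  -- Lagrange interpolation property: P i evaluated at f k gives Δ i k
  have hPfk : ∀ (i : Fin m) (k : Fin ℓ), (P i).eval (f k) = Δ i k := by
    intro i k
    rw [hPeval, hU]
    have h2 : (∏ r, (f r - f k)) = 0 :=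
      Finset.prod_eq_zero (Finset.mem_univ k) (by simp)
    rw [h2, zero_mul, add_zero]
    rw [Finset.sum_eq_single k]
    · have hne : (∏ r ∈ univ \ {k}, (f r - f k)) ≠ 0 := by
        refine Finset.prod_ne_zero_iff.mpr ?_
        intro r hr
        rw [Finset.mem_sdiff, Finset.mem_singleton] at hr
        exact sub_ne_zero.mpr (fun h => hr.2 (hf h))
      rw [mul_comm, div_mul_cancel₀ _ hne]
    · intro k' _ hk'
      have hk : k ∈ univ \ {k'} := by simp [Ne.symm hk']
      rw [Finset.prod_eq_zero hk (by ring), zero_mul]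
    · simp
  -- quotient polynomials
  set b : Fin m → Fin ℓ → F[X] := fun i k => (P i - C (Δ i k)) /ₘ (X - C (f k)) with hbdef
  have hb : ∀ i k, (X - C (f k)) * b i k = P i - C (Δ i k) := by
    intro i k
    refine mul_divByMonic_eq_iff_isRoot.mpr ?_
    simp [IsRoot, hPfk i k]
  have hbdeg : ∀ i k, (b i k).natDegree ≤ ℓ := by
    intro i k
    have h1 : (b i k).degree ≤ (P i - C (Δ i k)).degree := degree_divByMonic_le _ _
    have h2 : (P i - C (Δ i k)).natDegree ≤ ℓ := by
      refine (natDegree_sub_le _ _).trans (max_le (hPdeg i) ?_)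
      simp
    exact le_trans (natDegree_le_natDegree h1) h2
  refine ⟨fun i k => -(b i k) + ∑ j, ∑ k', C (Zbar (i, k) (j, k')) * P (π j), ?_, ?_⟩
  · intro i k
    rw [← natDegree_le_iff_degree_le]
    refine (natDegree_add_le _ _).trans (max_le ?_ ?_)
    · simpa using hbdeg i k
    · refine natDegree_sum_le_of_forall_le _ _ ?_
      intro j _
      refine natDegree_sum_le_of_forall_le _ _ ?_
      intro k' _
      refine (natDegree_mul_le).trans ?_
      simpa using hPdeg (π j)
  · intro α hα i k
    have hne : f k - α ≠ 0 := sub_ne_zero.mpr (fun h => hα k h.symm)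
    have hmv : (R α).mulVec (Uhat α) (i, k)
        = ∑ j, ∑ k', R α (i, k) (j, k') * Uhat α (j, k') := by
      simp [Matrix.mulVec, dotProduct, Fintype.sum_prod_type]
    rw [hmv]
    have hsplit : ∀ j k', R α (i, k) (j, k') * Uhat α (j, k')
        = (if j = π⁻¹ i ∧ k' = k then (1 / (f k - α)) * U (π j) α else 0)
          + Zbar (i, k) (j, k') * U (π j) α := by
      intro j k'
      rw [hR, hUhat, add_mul, ite_mul, zero_mul]
    simp only [hsplit, Finset.sum_add_distrib]
    have hsum1 : (∑ j, ∑ k', if j = π⁻¹ i ∧ k' = k then (1 / (f k - α)) * U (π j) α else 0)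
        = (1 / (f k - α)) * U i α := by
      rw [Finset.sum_eq_single (π⁻¹ i)]
      · rw [Finset.sum_eq_single k]
        · simp
        · intro k' _ hk'; simp [hk']
        · simp
      · intro j _ hj
        exact Finset.sum_eq_zero (fun k' _ => by rw [if_neg (fun h => hj h.1)])
      · simp
    rw [hsum1]
    have hkey : U i α = Δ i k + (α - f k) * (b i k).eval α := by
      have := congrArg (eval α) (hb i k)
      simp only [eval_mul, eval_sub, eval_X, eval_C, hPeval] at this
      linear_combination -this
    have hfrac : (1 / (f k - α)) * U i α = Δ i k / (f k - α) - (b i k).eval α := by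
      rw [hkey]
      field_simp
      ring
    have hsum2 : (∑ j, ∑ k', Zbar (i, k) (j, k') * U (π j) α)
        = (∑ j, ∑ k', C (Zbar (i, k) (j, k')) * P (π j)).eval α := by
      simp [eval_finset_sum, hPeval]
    rw [hfrac, hsum2]
    simp only [eval_add, eval_neg]
    ring
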